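/- In sl(3,ℂ) with the Gell-Mann basis λ₁,…,λ₈ (realized as the standard traceless 3×3 Hermitian Gell-Mann matrices, with Lie bracket the matrix commutator), the sets s₊ := span_ℂ{λ₃ + i λ₈, λ₁ + i λ₂, λ₄ + i λ₅, λ₆ + i λ₇} and s₋ := span_ℂ{λ₃ − i λ₈, λ₁ − i λ₂, λ₄ − i λ₅, λ₆ − i λ₇} are Lie subalgebras of sl(3,ℂ) satisfying s₊ ⊕ s₋ = sl(3,ℂ) as vector spaces, and both are solvable. -/

import Mathlib

open Matrix

attribute [local instance] LieRing.ofAssociativeRing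

/-- The standard Gell-Mann matrices `λ₁,…,λ₈` (indexed by `Fin 8`, so `gellMann k = λ_{k+1}`). -/
noncomputable def gellMann : Fin 8 → Matrix (Fin 3) (Fin 3) ℂ
  | 0 => !![0, 1, 0; 1, 0, 0; 0, 0, 0]
  | 1 => !![0, -Complex.I, 0; Complex.I, 0, 0; 0, 0, 0]
  | 2 => !![1, 0, 0; 0, -1, 0; 0, 0, 0]
  | 3 => !![0, 0, 1; 0, 0, 0; 1, 0, 0]
  | 4 => !![0, 0, -Complex.I; 0, 0, 0; Complex.I, 0, 0]
  | 5 => !![0, 0, 0; 0, 0, 1; 0, 1, 0]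
  | 6 => !![0, 0, 0; 0, 0, -Complex.I; 0, Complex.I, 0]
  | 7 => ((Real.sqrt 3 : ℂ))⁻¹ • !![1, 0, 0; 0, 1, 0; 0, 0, -2]

namespace SL3Aux

abbrev M3 := Matrix (Fin 3) (Fin 3) ℂ

noncomputable def cc : ℂ := Complex.I * (Real.sqrt 3 : ℂ)⁻¹

lemma cc_ne : cc ≠ 0 := by
  apply mul_ne_zero Complex.I_ne_zero
  apply inv_ne_zero
  rw [Ne, Complex.ofReal_eq_zero]
  positivity

noncomputable def U0 : M3 := !![1+cc,0,0;0,-1+cc,0;0,0,-2*cc]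
noncomputable def U1 : M3 := !![0,2,0;0,0,0;0,0,0]
noncomputable def U2 : M3 := !![0,0,2;0,0,0;0,0,0]
noncomputable def U3 : M3 := !![0,0,0;0,0,2;0,0,0]
noncomputable def V0 : M3 := !![1-cc,0,0;0,-1-cc,0;0,0,2*cc]
noncomputable def V1 : M3 := !![0,0,0;2,0,0;0,0,0]
noncomputable def V2 : M3 := !![0,0,0;0,0,0;2,0,0]
noncomputable def V3 : M3 := !![0,0,0;0,0,0;0,2,0]

lemma eta3 (m : M3) :
    m = !![m 0 0, m 0 1, m 0 2; m 1 0, m 1 1, m 1 2; m 2 0, m 2 1, m 2 2] :=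
  (Matrix.etaExpand_eq m).symm

lemma hU0 : gellMann 2 + Complex.I • gellMann 7 = U0 := by
  ext i j; fin_cases i <;> fin_cases j <;>
    simp [gellMann, U0, cc, vecHead, vecTail] <;> ring
lemma hU1 : gellMann 0 + Complex.I • gellMann 1 = U1 := by
  ext i j; fin_cases i <;> fin_cases j <;>
    simp [gellMann, U1, Complex.I_mul_I, vecHead, vecTail] <;> norm_num
lemma hU2 : gellMann 3 + Complex.I • gellMann 4 = U2 := by
  ext i j; fin_cases i <;> fin_cases j <;>
    simp [gellMann, U2, Complex.I_mul_I, vecHead, vecTail] <;> norm_num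
lemma hU3 : gellMann 5 + Complex.I • gellMann 6 = U3 := by
  ext i j; fin_cases i <;> fin_cases j <;>
    simp [gellMann, U3, Complex.I_mul_I, vecHead, vecTail] <;> norm_num
lemma hV0 : gellMann 2 - Complex.I • gellMann 7 = V0 := by
  ext i j; fin_cases i <;> fin_cases j <;>
    simp [gellMann, V0, cc, vecHead, vecTail] <;> ring
lemma hV1 : gellMann 0 - Complex.I • gellMann 1 = V1 := by
  ext i j; fin_cases i <;> fin_cases j <;>
    simp [gellMann, V1, Complex.I_mul_I, vecHead, vecTail] <;> norm_num
lemma hV2 : gellMann 3 - Complex.I • gellMann 4 = V2 := by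
  ext i j; fin_cases i <;> fin_cases j <;>
    simp [gellMann, V2, Complex.I_mul_I, vecHead, vecTail] <;> norm_num
lemma hV3 : gellMann 5 - Complex.I • gellMann 6 = V3 := by
  ext i j; fin_cases i <;> fin_cases j <;>
    simp [gellMann, V3, Complex.I_mul_I, vecHead, vecTail] <;> norm_num

/-- Bilinearity of the bracket lifts generator computations to spans. -/
lemma bracket_span {L : Type*} [LieRing L] [LieAlgebra ℂ L] {s : Set L} {W : Submodule ℂ L}
    (h : ∀ x ∈ s, ∀ y ∈ s, ⁅x, y⁆ ∈ W) :
    ∀ x ∈ Submodule.span ℂ s, ∀ y ∈ Submodule.span ℂ s, ⁅x, y⁆ ∈ W := by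
  have h1 : ∀ y ∈ s, ∀ x ∈ Submodule.span ℂ s, ⁅x, y⁆ ∈ W := by
    intro y hy x hx
    induction hx using Submodule.span_induction with
    | mem z hz => exact h z hz y hy
    | zero => rw [zero_lie]; exact W.zero_mem
    | add a b _ _ ha hb => rw [add_lie]; exact W.add_mem ha hb
    | smul t a _ ha => rw [smul_lie]; exact W.smul_mem t ha
  intro x hx y hy
  induction hy using Submodule.span_induction with
  | mem z hz => exact h1 z hz x hx
  | zero => rw [lie_zero]; exact W.zero_mem
  | add a b _ _ ha hb => rw [lie_add]; exact W.add_mem ha hb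
  | smul t a _ ha => rw [lie_smul]; exact W.smul_mem t ha

/-- A Lie algebra with a chain `⊤ = V 0, V 1, V 2, V 3 = ⊥` of submodules with
`⁅V k, V k⁆ ⊆ V (k+1)` is solvable. -/
lemma solvable_of_chain {L : Type*} [LieRing L] [LieAlgebra ℂ L] (V : ℕ → Submodule ℂ L)
    (h0 : V 0 = ⊤) (h3 : V 3 = ⊥)
    (hb : ∀ k, ∀ x ∈ V k, ∀ y ∈ V k, ⁅x, y⁆ ∈ V (k + 1)) :
    LieAlgebra.IsSolvable L := by
  have key : ∀ k, ∀ x ∈ LieAlgebra.derivedSeries ℂ L k, x ∈ V k := by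
    intro k
    induction k with
    | zero => intro x _; rw [h0]; exact Submodule.mem_top
    | succ n ih =>
      intro x hx
      rw [LieAlgebra.derivedSeries_def, LieAlgebra.derivedSeriesOfIdeal_succ,
        ← LieSubmodule.mem_toSubmodule, LieSubmodule.lieIdeal_oper_eq_linear_span] at hx
      induction hx using Submodule.span_induction with
      | mem z hz =>
        obtain ⟨a, b, rfl⟩ := hz
        exact hb n _ (ih _ a.2) _ (ih _ b.2)
      | zero => exact (V (n+1)).zero_mem
      | add a b _ _ ha hb' => exact (V (n+1)).add_mem ha hb'
      | smul t a _ ha => exact (V (n+1)).smul_mem t ha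
  refine LieAlgebra.IsSolvable.mk (R := ℂ) (k := 3) ?_
  rw [LieSubmodule.eq_bot_iff]
  intro m hm
  have := key 3 m hm
  rw [h3] at this
  simpa using this

lemma lit_mem_upper (a b d : ℂ) :
    !![0,a,b;0,0,d;0,0,0] ∈ Submodule.span ℂ ({U1, U2, U3} : Set M3) := by
  have h : !![0,a,b;0,0,d;0,0,0] = (a/2) • U1 + (b/2) • U2 + (d/2) • U3 := by
    ext i j
    fin_cases i <;> fin_cases j <;>
      simp [U1, U2, U3, vecHead, vecTail] <;> ring
  rw [h]
  refine Submodule.add_mem _ (Submodule.add_mem _ ?_ ?_) ?_ <;>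
    exact Submodule.smul_mem _ _ (Submodule.subset_span (by simp))

lemma lit_mem_lower (a b d : ℂ) :
    !![0,0,0;a,0,0;b,d,0] ∈ Submodule.span ℂ ({V1, V2, V3} : Set M3) := by
  have h : !![0,0,0;a,0,0;b,d,0] = (a/2) • V1 + (b/2) • V2 + (d/2) • V3 := by
    ext i j
    fin_cases i <;> fin_cases j <;>
      simp [V1, V2, V3, vecHead, vecTail] <;> ring
  rw [h]
  refine Submodule.add_mem _ (Submodule.add_mem _ ?_ ?_) ?_ <;>
    exact Submodule.smul_mem _ _ (Submodule.subset_span (by simp))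

lemma lit_mem_U2 (b : ℂ) :
    !![0,0,b;0,0,0;0,0,0] ∈ Submodule.span ℂ ({U2} : Set M3) := by
  rw [Submodule.mem_span_singleton]
  refine ⟨b/2, ?_⟩
  ext i j
  fin_cases i <;> fin_cases j <;> simp [U2, vecHead, vecTail] <;> ring

lemma lit_mem_V2 (b : ℂ) :
    !![0,0,0;0,0,0;b,0,0] ∈ Submodule.span ℂ ({V2} : Set M3) := by
  rw [Submodule.mem_span_singleton]
  refine ⟨b/2, ?_⟩
  ext i j
  fin_cases i <;> fin_cases j <;> simp [V2, vecHead, vecTail] <;> ring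


lemma sub3 (a₀₀ a₀₁ a₀₂ a₁₀ a₁₁ a₁₂ a₂₀ a₂₁ a₂₂ b₀₀ b₀₁ b₀₂ b₁₀ b₁₁ b₁₂ b₂₀ b₂₁ b₂₂ : ℂ) :
    (!![a₀₀,a₀₁,a₀₂;a₁₀,a₁₁,a₁₂;a₂₀,a₂₁,a₂₂] : M3) - !![b₀₀,b₀₁,b₀₂;b₁₀,b₁₁,b₁₂;b₂₀,b₂₁,b₂₂] =
      !![a₀₀-b₀₀,a₀₁-b₀₁,a₀₂-b₀₂;a₁₀-b₁₀,a₁₁-b₁₁,a₁₂-b₁₂;a₂₀-b₂₀,a₂₁-b₂₁,a₂₂-b₂₂] := by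
  ext i j; fin_cases i <;> fin_cases j <;> rfl

lemma add3 (a₀₀ a₀₁ a₀₂ a₁₀ a₁₁ a₁₂ a₂₀ a₂₁ a₂₂ b₀₀ b₀₁ b₀₂ b₁₀ b₁₁ b₁₂ b₂₀ b₂₁ b₂₂ : ℂ) :
    (!![a₀₀,a₀₁,a₀₂;a₁₀,a₁₁,a₁₂;a₂₀,a₂₁,a₂₂] : M3) + !![b₀₀,b₀₁,b₀₂;b₁₀,b₁₁,b₁₂;b₂₀,b₂₁,b₂₂] =
      !![a₀₀+b₀₀,a₀₁+b₀₁,a₀₂+b₀₂;a₁₀+b₁₀,a₁₁+b₁₁,a₁₂+b₁₂;a₂₀+b₂₀,a₂₁+b₂₁,a₂₂+b₂₂] := by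
  ext i j; fin_cases i <;> fin_cases j <;> rfl

lemma smul3 (x a₀₀ a₀₁ a₀₂ a₁₀ a₁₁ a₁₂ a₂₀ a₂₁ a₂₂ : ℂ) :
    x • (!![a₀₀,a₀₁,a₀₂;a₁₀,a₁₁,a₁₂;a₂₀,a₂₁,a₂₂] : M3) =
      !![x*a₀₀,x*a₀₁,x*a₀₂;x*a₁₀,x*a₁₁,x*a₁₂;x*a₂₀,x*a₂₁,x*a₂₂] := by
  ext i j; fin_cases i <;> fin_cases j <;> rfl

lemma mk3_eq {a₀₀ a₀₁ a₀₂ a₁₀ a₁₁ a₁₂ a₂₀ a₂₁ a₂₂ b₀₀ b₀₁ b₀₂ b₁₀ b₁₁ b₁₂ b₂₀ b₂₁ b₂₂ : ℂ}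
    (h₀₀ : a₀₀ = b₀₀) (h₀₁ : a₀₁ = b₀₁) (h₀₂ : a₀₂ = b₀₂)
    (h₁₀ : a₁₀ = b₁₀) (h₁₁ : a₁₁ = b₁₁) (h₁₂ : a₁₂ = b₁₂)
    (h₂₀ : a₂₀ = b₂₀) (h₂₁ : a₂₁ = b₂₁) (h₂₂ : a₂₂ = b₂₂) :
    (!![a₀₀,a₀₁,a₀₂;a₁₀,a₁₁,a₁₂;a₂₀,a₂₁,a₂₂] : M3) =
      !![b₀₀,b₀₁,b₀₂;b₁₀,b₁₁,b₁₂;b₂₀,b₂₁,b₂₂] := by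
  subst_vars; rfl

lemma memUpper9 (a₀₀ a₀₁ a₀₂ a₁₀ a₁₁ a₁₂ a₂₀ a₂₁ a₂₂ : ℂ)
    (h₀₀ : a₀₀ = 0) (h₁₀ : a₁₀ = 0) (h₁₁ : a₁₁ = 0)
    (h₂₀ : a₂₀ = 0) (h₂₁ : a₂₁ = 0) (h₂₂ : a₂₂ = 0) :
    (!![a₀₀,a₀₁,a₀₂;a₁₀,a₁₁,a₁₂;a₂₀,a₂₁,a₂₂] : M3) ∈
      Submodule.span ℂ ({U1, U2, U3} : Set M3) := by
  subst_vars; exact lit_mem_upper _ _ _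

lemma memLower9 (a₀₀ a₀₁ a₀₂ a₁₀ a₁₁ a₁₂ a₂₀ a₂₁ a₂₂ : ℂ)
    (h₀₀ : a₀₀ = 0) (h₀₁ : a₀₁ = 0) (h₀₂ : a₀₂ = 0)
    (h₁₁ : a₁₁ = 0) (h₁₂ : a₁₂ = 0) (h₂₂ : a₂₂ = 0) :
    (!![a₀₀,a₀₁,a₀₂;a₁₀,a₁₁,a₁₂;a₂₀,a₂₁,a₂₂] : M3) ∈
      Submodule.span ℂ ({V1, V2, V3} : Set M3) := by
  subst_vars; exact lit_mem_lower _ _ _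

lemma memU29 (a₀₀ a₀₁ a₀₂ a₁₀ a₁₁ a₁₂ a₂₀ a₂₁ a₂₂ : ℂ)
    (h₀₀ : a₀₀ = 0) (h₀₁ : a₀₁ = 0) (h₁₀ : a₁₀ = 0) (h₁₁ : a₁₁ = 0) (h₁₂ : a₁₂ = 0)
    (h₂₀ : a₂₀ = 0) (h₂₁ : a₂₁ = 0) (h₂₂ : a₂₂ = 0) :
    (!![a₀₀,a₀₁,a₀₂;a₁₀,a₁₁,a₁₂;a₂₀,a₂₁,a₂₂] : M3) ∈
      Submodule.span ℂ ({U2} : Set M3) := by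
  subst_vars; exact lit_mem_U2 _

lemma memV29 (a₀₀ a₀₁ a₀₂ a₁₀ a₁₁ a₁₂ a₂₀ a₂₁ a₂₂ : ℂ)
    (h₀₀ : a₀₀ = 0) (h₀₁ : a₀₁ = 0) (h₀₂ : a₀₂ = 0) (h₁₀ : a₁₀ = 0) (h₁₁ : a₁₁ = 0)
    (h₁₂ : a₁₂ = 0) (h₂₁ : a₂₁ = 0) (h₂₂ : a₂₂ = 0) :
    (!![a₀₀,a₀₁,a₀₂;a₁₀,a₁₁,a₁₂;a₂₀,a₂₁,a₂₂] : M3) ∈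
      Submodule.span ℂ ({V2} : Set M3) := by
  subst_vars; exact lit_mem_V2 _

lemma memBot9 (a₀₀ a₀₁ a₀₂ a₁₀ a₁₁ a₁₂ a₂₀ a₂₁ a₂₂ : ℂ)
    (h₀₀ : a₀₀ = 0) (h₀₁ : a₀₁ = 0) (h₀₂ : a₀₂ = 0) (h₁₀ : a₁₀ = 0) (h₁₁ : a₁₁ = 0)
    (h₁₂ : a₁₂ = 0) (h₂₀ : a₂₀ = 0) (h₂₁ : a₂₁ = 0) (h₂₂ : a₂₂ = 0) :
    (!![a₀₀,a₀₁,a₀₂;a₁₀,a₁₁,a₁₂;a₂₀,a₂₁,a₂₂] : M3) ∈ (⊥ : Submodule ℂ M3) := by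
  subst_vars
  rw [Submodule.mem_bot]
  ext i j; fin_cases i <;> fin_cases j <;> rfl

lemma brP0 : ∀ x ∈ ({U0, U1, U2, U3} : Set M3), ∀ y ∈ ({U0, U1, U2, U3} : Set M3),
    ⁅x, y⁆ ∈ Submodule.span ℂ ({U1, U2, U3} : Set M3) := by
  intro x hx y hy
  simp only [Set.mem_insert_iff, Set.mem_singleton_iff] at hx hy
  rcases hx with rfl | rfl | rfl | rfl <;> rcases hy with rfl | rfl | rfl | rfl <;>
    (simp only [U0, U1, U2, U3]; simp only [Ring.lie_def, Matrix.mul_fin_three, sub3]; exact memUpper9 _ _ _ _ _ _ _ _ _ (by ring) (by ring) (by ring) (by ring)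
      (by ring) (by ring))

lemma brP1 : ∀ x ∈ ({U1, U2, U3} : Set M3), ∀ y ∈ ({U1, U2, U3} : Set M3),
    ⁅x, y⁆ ∈ Submodule.span ℂ ({U2} : Set M3) := by
  intro x hx y hy
  simp only [Set.mem_insert_iff, Set.mem_singleton_iff] at hx hy
  rcases hx with rfl | rfl | rfl <;> rcases hy with rfl | rfl | rfl <;>
    (simp only [U1, U2, U3]; simp only [Ring.lie_def, Matrix.mul_fin_three, sub3]; exact memU29 _ _ _ _ _ _ _ _ _ (by ring) (by ring) (by ring) (by ring)
      (by ring) (by ring) (by ring) (by ring))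

lemma brP2 : ∀ x ∈ ({U2} : Set M3), ∀ y ∈ ({U2} : Set M3),
    ⁅x, y⁆ ∈ (⊥ : Submodule ℂ M3) := by
  intro x hx y hy
  simp only [Set.mem_singleton_iff] at hx hy
  subst hx; subst hy
  simp only [U2]
  simp only [Ring.lie_def, Matrix.mul_fin_three, sub3]
  exact memBot9 _ _ _ _ _ _ _ _ _ (by ring) (by ring) (by ring) (by ring) (by ring)
    (by ring) (by ring) (by ring) (by ring)

lemma brM0 : ∀ x ∈ ({V0, V1, V2, V3} : Set M3), ∀ y ∈ ({V0, V1, V2, V3} : Set M3),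
    ⁅x, y⁆ ∈ Submodule.span ℂ ({V1, V2, V3} : Set M3) := by
  intro x hx y hy
  simp only [Set.mem_insert_iff, Set.mem_singleton_iff] at hx hy
  rcases hx with rfl | rfl | rfl | rfl <;> rcases hy with rfl | rfl | rfl | rfl <;>
    (simp only [V0, V1, V2, V3]; simp only [Ring.lie_def, Matrix.mul_fin_three, sub3]; exact memLower9 _ _ _ _ _ _ _ _ _ (by ring) (by ring) (by ring) (by ring)
      (by ring) (by ring))

lemma brM1 : ∀ x ∈ ({V1, V2, V3} : Set M3), ∀ y ∈ ({V1, V2, V3} : Set M3),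
    ⁅x, y⁆ ∈ Submodule.span ℂ ({V2} : Set M3) := by
  intro x hx y hy
  simp only [Set.mem_insert_iff, Set.mem_singleton_iff] at hx hy
  rcases hx with rfl | rfl | rfl <;> rcases hy with rfl | rfl | rfl <;>
    (simp only [V1, V2, V3]; simp only [Ring.lie_def, Matrix.mul_fin_three, sub3]; exact memV29 _ _ _ _ _ _ _ _ _ (by ring) (by ring) (by ring) (by ring)
      (by ring) (by ring) (by ring) (by ring))

lemma brM2 : ∀ x ∈ ({V2} : Set M3), ∀ y ∈ ({V2} : Set M3),
    ⁅x, y⁆ ∈ (⊥ : Submodule ℂ M3) := by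
  intro x hx y hy
  simp only [Set.mem_singleton_iff] at hx hy
  subst hx; subst hy
  simp only [V2]
  simp only [Ring.lie_def, Matrix.mul_fin_three, sub3]
  exact memBot9 _ _ _ _ _ _ _ _ _ (by ring) (by ring) (by ring) (by ring) (by ring)
    (by ring) (by ring) (by ring) (by ring)

/-- Chains of submodules used for solvability. -/
noncomputable def Wp : ℕ → Submodule ℂ M3
  | 0 => ⊤
  | 1 => Submodule.span ℂ ({U1, U2, U3} : Set M3)
  | 2 => Submodule.span ℂ ({U2} : Set M3)
  | _ + 3 => ⊥

noncomputable def Wm : ℕ → Submodule ℂ M3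
  | 0 => ⊤
  | 1 => Submodule.span ℂ ({V1, V2, V3} : Set M3)
  | 2 => Submodule.span ℂ ({V2} : Set M3)
  | _ + 3 => ⊥

end SL3Aux

open SL3Aux

/-- in `sl(3,ℂ)` (traceless `3×3` complex matrices, with the commutator
bracket of the matrix algebra), `s₊ = span{λ₃+iλ₈, λ₁+iλ₂, λ₄+iλ₅, λ₆+iλ₇}` and
`s₋ = span{λ₃−iλ₈, λ₁−iλ₂, λ₄−iλ₅, λ₆−iλ₇}` are solvable Lie subalgebras with
`s₊ ⊕ s₋ = sl(3,ℂ)` as vector spaces. -/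
theorem sl3_gellmann_double_decomposition
    (sp sm : Submodule ℂ (Matrix (Fin 3) (Fin 3) ℂ))
    (hsp : sp = Submodule.span ℂ
      {gellMann 2 + Complex.I • gellMann 7, gellMann 0 + Complex.I • gellMann 1,
       gellMann 3 + Complex.I • gellMann 4, gellMann 5 + Complex.I • gellMann 6})
    (hsm : sm = Submodule.span ℂ
      {gellMann 2 - Complex.I • gellMann 7, gellMann 0 - Complex.I • gellMann 1,
       gellMann 3 - Complex.I • gellMann 4, gellMann 5 - Complex.I • gellMann 6}) :
    (∀ x ∈ sp, ∀ y ∈ sp, ⁅x, y⁆ ∈ sp) ∧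
    (∀ x ∈ sm, ∀ y ∈ sm, ⁅x, y⁆ ∈ sm) ∧
    (∀ S : LieSubalgebra ℂ (Matrix (Fin 3) (Fin 3) ℂ), S.toSubmodule = sp →
      LieAlgebra.IsSolvable S) ∧
    (∀ S : LieSubalgebra ℂ (Matrix (Fin 3) (Fin 3) ℂ), S.toSubmodule = sm →
      LieAlgebra.IsSolvable S) ∧
    sp ⊓ sm = ⊥ ∧
    sp ⊔ sm = LinearMap.ker (traceLinearMap (Fin 3) ℂ ℂ) := by
  rw [hU0, hU1, hU2, hU3] at hsp
  rw [hV0, hV1, hV2, hV3] at hsm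
  subst hsp; subst hsm
  have hUsub : Submodule.span ℂ ({U1, U2, U3} : Set M3) ≤
      Submodule.span ℂ ({U0, U1, U2, U3} : Set M3) :=
    Submodule.span_mono (by
      intro z hz
      simp only [Set.mem_insert_iff, Set.mem_singleton_iff] at hz ⊢
      tauto)
  have hVsub : Submodule.span ℂ ({V1, V2, V3} : Set M3) ≤
      Submodule.span ℂ ({V0, V1, V2, V3} : Set M3) :=
    Submodule.span_mono (by
      intro z hz
      simp only [Set.mem_insert_iff, Set.mem_singleton_iff] at hz ⊢
      tauto)
  refine ⟨?_, ?_, ?_, ?_, ?_, ?_⟩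
  · intro x hx y hy
    exact hUsub (bracket_span brP0 x hx y hy)
  · intro x hx y hy
    exact hVsub (bracket_span brM0 x hx y hy)
  · -- solvability of s₊
    intro S hS
    refine solvable_of_chain (fun k => (Wp k).comap (S.toSubmodule.subtype)) ?_ ?_ ?_
    · show Submodule.comap _ (⊤ : Submodule ℂ M3) = ⊤
      exact Submodule.comap_top _
    · show Submodule.comap _ (⊥ : Submodule ℂ M3) = ⊥
      rw [Submodule.comap_bot, Submodule.ker_subtype]
    · intro k x hx y hy
      rcases k with _|(_|(_|k))
      · have hx' : (x : M3) ∈ Submodule.span ℂ ({U0,U1,U2,U3} : Set M3) := by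
          rw [← hS]; exact x.2
        have hy' : (y : M3) ∈ Submodule.span ℂ ({U0,U1,U2,U3} : Set M3) := by
          rw [← hS]; exact y.2
        exact bracket_span brP0 _ hx' _ hy'
      · exact bracket_span brP1 _ hx _ hy
      · exact bracket_span brP2 _ hx _ hy
      · have hx0 : (x : M3) ∈ (⊥ : Submodule ℂ M3) := hx
        rw [Submodule.mem_bot] at hx0
        show ⁅(x : M3), (y : M3)⁆ ∈ (⊥ : Submodule ℂ M3)
        rw [hx0, zero_lie]
        exact Submodule.zero_mem _
  · -- solvability of s₋
    intro S hS
    refine solvable_of_chain (fun k => (Wm k).comap (S.toSubmodule.subtype)) ?_ ?_ ?_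
    · show Submodule.comap _ (⊤ : Submodule ℂ M3) = ⊤
      exact Submodule.comap_top _
    · show Submodule.comap _ (⊥ : Submodule ℂ M3) = ⊥
      rw [Submodule.comap_bot, Submodule.ker_subtype]
    · intro k x hx y hy
      rcases k with _|(_|(_|k))
      · have hx' : (x : M3) ∈ Submodule.span ℂ ({V0,V1,V2,V3} : Set M3) := by
          rw [← hS]; exact x.2
        have hy' : (y : M3) ∈ Submodule.span ℂ ({V0,V1,V2,V3} : Set M3) := by
          rw [← hS]; exact y.2
        exact bracket_span brM0 _ hx' _ hy'
      · exact bracket_span brM1 _ hx _ hy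
      · exact bracket_span brM2 _ hx _ hy
      · have hx0 : (x : M3) ∈ (⊥ : Submodule ℂ M3) := hx
        rw [Submodule.mem_bot] at hx0
        show ⁅(x : M3), (y : M3)⁆ ∈ (⊥ : Submodule ℂ M3)
        rw [hx0, zero_lie]
        exact Submodule.zero_mem _
  · -- trivial intersection
    rw [eq_bot_iff]
    intro x hx
    rw [Submodule.mem_inf] at hx
    obtain ⟨hxp, hxm⟩ := hx
    rw [Submodule.mem_span_insert] at hxp; obtain ⟨a, z, hz, rfl⟩ := hxp
    rw [Submodule.mem_span_insert] at hz; obtain ⟨b, z2, hz2, rfl⟩ := hz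
    rw [Submodule.mem_span_insert] at hz2; obtain ⟨c, z3, hz3, rfl⟩ := hz2
    rw [Submodule.mem_span_singleton] at hz3; obtain ⟨d, rfl⟩ := hz3
    rw [Submodule.mem_span_insert] at hxm; obtain ⟨e, w, hw, hxw⟩ := hxm
    rw [Submodule.mem_span_insert] at hw; obtain ⟨f, w2, hw2, rfl⟩ := hw
    rw [Submodule.mem_span_insert] at hw2; obtain ⟨g, w3, hw3, rfl⟩ := hw2
    rw [Submodule.mem_span_singleton] at hw3; obtain ⟨k, rfl⟩ := hw3
    simp only [U0, U1, U2, U3, V0, V1, V2, V3, smul3, add3] at hxw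
    rw [← Matrix.ext_iff] at hxw
    have h00 := hxw 0 0; have h11 := hxw 1 1
    have h01 := hxw 0 1; have h02 := hxw 0 2; have h12 := hxw 1 2
    have h10 := hxw 1 0; have h20 := hxw 2 0; have h21 := hxw 2 1
    simp only [Matrix.cons_val', Matrix.cons_val_zero, Matrix.cons_val_one, Matrix.cons_val_two,
      Matrix.head_cons, Matrix.vecHead, Matrix.vecTail, Matrix.empty_val',
      Matrix.cons_val_fin_one, Matrix.of_apply, Function.comp_apply,
      Fin.succ_zero_eq_one, Fin.succ_one_eq_two] at h00 h11 h01 h02 h12 h10 h20 h21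
    have hb : b = 0 := by linear_combination h01/2
    have hc : c = 0 := by linear_combination h02/2
    have hd : d = 0 := by linear_combination h12/2
    have hae : a = e := by linear_combination (h00 - h11)/2
    have h2 : a * cc = 0 := by linear_combination (h00 + h11)/4 + (cc/2) * hae
    have ha : a = 0 := by
      rcases mul_eq_zero.mp h2 with h | h
      · exact h
      · exact absurd h cc_ne
    rw [Submodule.mem_bot]
    simp [ha, hb, hc, hd]
  · -- sum is sl(3,C)
    rw [← Submodule.span_union]
    apply le_antisymm
    · rw [Submodule.span_le]
      rintro z hz
      simp only [Set.mem_union, Set.mem_insert_iff, Set.mem_singleton_iff] at hz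
      rw [SetLike.mem_coe, LinearMap.mem_ker]
      rcases hz with (rfl|rfl|rfl|rfl)|(rfl|rfl|rfl|rfl) <;>
        simp [Matrix.traceLinearMap, Matrix.trace_fin_three, U0, U1, U2, U3, V0, V1, V2, V3,
          vecHead, vecTail] <;> ring
    · intro x hx
      rw [LinearMap.mem_ker] at hx
      have hcc := cc_ne
      have htr : x 2 2 = -x 0 0 - x 1 1 := by
        have h : x 0 0 + x 1 1 + x 2 2 = 0 := by
          simpa [Matrix.traceLinearMap, Matrix.trace_fin_three] using hx
        linear_combination h
      have hxeq : x = ((x 0 0 - x 1 1)/4 + (x 0 0 + x 1 1)/(4*cc)) • U0 +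
          (((x 0 0 - x 1 1)/4 - (x 0 0 + x 1 1)/(4*cc)) • V0 +
          ((x 0 1/2) • U1 + ((x 0 2/2) • U2 + ((x 1 2/2) • U3 +
          ((x 1 0/2) • V1 + ((x 2 0/2) • V2 + (x 2 1/2) • V3)))))) := by
        conv_lhs => rw [Matrix.eta_fin_three x]
        simp only [U0, U1, U2, U3, V0, V1, V2, V3, smul3, add3]
        refine mk3_eq ?_ ?_ ?_ ?_ ?_ ?_ ?_ ?_ ?_
        · field_simp [cc_ne]; ring
        · ring
        · ring
        · ring
        · field_simp [cc_ne]; ring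
        · ring
        · ring
        · ring
        · rw [htr]; field_simp [cc_ne]; ring
      rw [hxeq]
      apply Submodule.add_mem _ (Submodule.smul_mem _ _ (Submodule.subset_span (by simp)))
      apply Submodule.add_mem _ (Submodule.smul_mem _ _ (Submodule.subset_span (by simp)))
      apply Submodule.add_mem _ (Submodule.smul_mem _ _ (Submodule.subset_span (by simp)))
      apply Submodule.add_mem _ (Submodule.smul_mem _ _ (Submodule.subset_span (by simp)))
      apply Submodule.add_mem _ (Submodule.smul_mem _ _ (Submodule.subset_span (by simp)))
      apply Submodule.add_mem _ (Submodule.smul_mem _ _ (Submodule.subset_span (by simp)))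
      apply Submodule.add_mem _ (Submodule.smul_mem _ _ (Submodule.subset_span (by simp)))
      exact Submodule.smul_mem _ _ (Submodule.subset_span (by simp))
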